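/- Let A and B be nonempty finite types and let K be a Hermitian complex matrix indexed by A × B. Then the following are equivalent: (i) for every Hermitian positive semidefinite matrix C indexed by A × B such that Tr_B(C) = r • 1 for some real r, one has Re Tr(K·C) ≥ 0; (ii) there exist a Hermitian positive semidefinite matrix ω indexed by A × B and a Hermitian matrix A' indexed by A with Tr(A') = 0 such that K = ω + A' ⊗ₖ 1. -/

import Mathlib

open Matrix
open scoped Kronecker ComplexOrder Pointwise

noncomputable def jordan {n : Type*} [Fintype n] (X Y : Matrix n n ℂ) : Matrix n n ℂ :=
  (2 : ℂ)⁻¹ • (X * Y + Y * X)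

noncomputable def trB {A B : Type*} [Fintype B] (M : Matrix (A × B) (A × B) ℂ) : Matrix A A ℂ :=
  Matrix.of fun i j => ∑ k, M (i, k) (j, k)

noncomputable def trA {A B : Type*} [Fintype A] (M : Matrix (A × B) (A × B) ℂ) : Matrix B B ℂ :=
  Matrix.of fun k l => ∑ i, M (i, k) (i, l)

def ptA {A B : Type*} (M : Matrix (A × B) (A × B) ℂ) : Matrix (A × B) (A × B) ℂ :=
  Matrix.of fun p q => M (q.1, p.2) (p.1, q.2)

def swap (A : Type*) [DecidableEq A] : Matrix (A × A) (A × A) ℂ :=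
  Matrix.of fun p q => if p.1 = q.2 ∧ p.2 = q.1 then 1 else 0

def IsState {A : Type*} [Fintype A] (ρ : Matrix A A ℂ) : Prop :=
  ρ.PosSemidef ∧ ρ.trace = 1

def IsJam {A B : Type*} [Fintype A] [Fintype B] [DecidableEq A]
    (J : Matrix (A × B) (A × B) ℂ) : Prop :=
  (ptA J).PosSemidef ∧ trB J = 1

noncomputable def cost {A B : Type*} [Fintype A] [Fintype B] [DecidableEq A] [DecidableEq B]
    (K : Matrix (A × B) (A × B) ℂ) (ρ : Matrix A A ℂ) (σ : Matrix B B ℂ) : ℝ :=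
  sInf { r : ℝ | ∃ J : Matrix (A × B) (A × B) ℂ, IsJam J ∧
      trA ((ρ ⊗ₖ (1 : Matrix B B ℂ)) * J) = σ ∧
      r = (Matrix.trace (K * jordan (ρ ⊗ₖ (1 : Matrix B B ℂ)) J)).re }

namespace Stmt8Aux

set_option linter.unusedSectionVars false
set_option maxHeartbeats 1000000

section Generic

variable {n : Type*} [Fintype n] [DecidableEq n]

noncomputable def toE (M : Matrix n n ℂ) : EuclideanSpace ℂ (n × n) :=
  WithLp.toLp 2 (fun p : n × n => M p.1 p.2)

noncomputable def mat (x : EuclideanSpace ℂ (n × n)) : Matrix n n ℂ :=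
  Matrix.of fun i j => x (i, j)

lemma mat_toE (M : Matrix n n ℂ) : mat (toE M) = M := rfl
lemma toE_mat (x : EuclideanSpace ℂ (n × n)) : toE (mat x) = x := rfl
lemma toE_add (M N : Matrix n n ℂ) : toE (M + N) = toE M + toE N := rfl
lemma toE_smul (c : ℂ) (M : Matrix n n ℂ) : toE (c • M) = c • toE M := rfl
lemma toE_real_smul (r : ℝ) (M : Matrix n n ℂ) : toE (r • M) = r • toE M := rfl
lemma toE_zero : (toE (0 : Matrix n n ℂ)) = 0 := rfl
lemma toE_inj {M N : Matrix n n ℂ} (h : toE M = toE N) : M = N := by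
  have := congrArg mat h; simpa [mat_toE] using this

lemma real_smul_eq (r : ℝ) (M : Matrix n n ℂ) : r • M = (r : ℂ) • M := by
  ext i j
  simp [Complex.real_smul]

lemma real_smul_E (r : ℝ) (x : EuclideanSpace ℂ (n × n)) : r • x = (r : ℂ) • x := by
  ext p
  show r • x p = (r : ℂ) * x p
  exact Complex.real_smul

lemma real_inner_toE (X Y : Matrix n n ℂ) :
    (inner ℝ (toE X) (toE Y) : ℝ) = (Matrix.trace (Xᴴ * Y)).re := by
  simp only [PiLp.inner_apply, Complex.inner, Matrix.trace, Matrix.mul_apply,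
    Matrix.conjTranspose_apply, Matrix.diag_apply, Complex.re_sum, toE]
  rw [Fintype.sum_prod_type]
  rw [Finset.sum_comm]
  refine Finset.sum_congr rfl fun y _ => Finset.sum_congr rfl fun x _ => ?_
  rw [mul_comm]; rfl

lemma diag_nonneg {M : Matrix n n ℂ} (hM : M.PosSemidef) (i : n) : 0 ≤ M i i := by
  have := hM.dotProduct_mulVec_nonneg (Pi.single i 1)
  simpa [dotProduct, mulVec, Pi.single_apply, Finset.sum_ite_eq, Finset.sum_ite_eq'] using this

lemma trace_nonneg' {M : Matrix n n ℂ} (hM : M.PosSemidef) : 0 ≤ M.trace :=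
  Finset.sum_nonneg fun i _ => diag_nonneg hM i

lemma re_trace_nonneg {M : Matrix n n ℂ} (hM : M.PosSemidef) : 0 ≤ M.trace.re :=
  (Complex.le_def.mp (trace_nonneg' hM)).1

open scoped MatrixOrder in
lemma psd_factor {M : Matrix n n ℂ} (hM : M.PosSemidef) : ∃ B : Matrix n n ℂ, M = Bᴴ * B := by
  obtain ⟨X, hX, -, hXX⟩ := CFC.exists_sqrt_of_isSelfAdjoint_of_quasispectrumRestricts
    hM.isHermitian.isSelfAdjoint (QuasispectrumRestricts.nnreal_of_nonneg hM.nonneg)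
  exact ⟨X, by rw [← hXX, show Xᴴ = X from hX.star_eq]⟩

lemma entry_sq_le {M : Matrix n n ℂ} (hM : M.PosSemidef) (i j : n) :
    Complex.normSq (M i j) ≤ (M i i).re * (M j j).re := by
  obtain ⟨B, rfl⟩ := psd_factor hM
  set u : EuclideanSpace ℂ n := WithLp.toLp 2 (fun k => B k i) with hu
  set v : EuclideanSpace ℂ n := WithLp.toLp 2 (fun k => B k j) with hv
  have hentry : ∀ a b : n, ∀ w z : EuclideanSpace ℂ n, (∀ k, w k = B k a) → (∀ k, z k = B k b) →
      (Bᴴ * B) a b = inner ℂ w z := by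
    intro a b w z hw hz
    simp [Matrix.mul_apply, Matrix.conjTranspose_apply, PiLp.inner_apply, hw, hz, mul_comm]
  have h1 : (Bᴴ * B) i j = inner ℂ u v := hentry i j u v (fun _ => rfl) (fun _ => rfl)
  have h2 : (Bᴴ * B) i i = inner ℂ u u := hentry i i u u (fun _ => rfl) (fun _ => rfl)
  have h3 : (Bᴴ * B) j j = inner ℂ v v := hentry j j v v (fun _ => rfl) (fun _ => rfl)
  have hii : ((Bᴴ * B) i i).re = ‖u‖ ^ 2 := by
    rw [h2, ← inner_self_eq_norm_sq (𝕜 := ℂ) u]; rfl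
  have hjj : ((Bᴴ * B) j j).re = ‖v‖ ^ 2 := by
    rw [h3, ← inner_self_eq_norm_sq (𝕜 := ℂ) v]; rfl
  have hb : ‖(Bᴴ * B) i j‖ ≤ ‖u‖ * ‖v‖ := h1 ▸ norm_inner_le_norm u v
  have : Complex.normSq ((Bᴴ * B) i j) = ‖(Bᴴ * B) i j‖ ^ 2 := by
    rw [← Complex.sq_norm]
  rw [this, hii, hjj]
  calc ‖(Bᴴ * B) i j‖ ^ 2 ≤ (‖u‖ * ‖v‖) ^ 2 := by
        apply pow_le_pow_left₀ (norm_nonneg _) hb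
    _ = ‖u‖ ^ 2 * ‖v‖ ^ 2 := by ring

lemma norm_toE_le {M : Matrix n n ℂ} (hM : M.PosSemidef) :
    ‖toE M‖ ≤ M.trace.re := by
  have h1 : ‖toE M‖ = Real.sqrt (∑ p : n × n, ‖M p.1 p.2‖ ^ 2) := by
    rw [EuclideanSpace.norm_eq]
    congr 1
  have h2 : ∑ p : n × n, ‖M p.1 p.2‖ ^ 2 ≤ (M.trace.re) ^ 2 := by
    have : ∀ p : n × n, ‖M p.1 p.2‖ ^ 2 ≤ (M p.1 p.1).re * (M p.2 p.2).re := by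
      intro p
      have := entry_sq_le hM p.1 p.2
      rwa [← Complex.sq_norm] at this
    calc ∑ p : n × n, ‖M p.1 p.2‖ ^ 2 ≤ ∑ p : n × n, (M p.1 p.1).re * (M p.2 p.2).re :=
          Finset.sum_le_sum fun p _ => this p
      _ = (∑ i, (M i i).re) * (∑ j, (M j j).re) := by
          rw [Finset.sum_mul_sum, ← Fintype.sum_prod_type']
      _ = (M.trace.re) ^ 2 := by
          have : M.trace.re = ∑ i, (M i i).re := by simp [Matrix.trace, Complex.re_sum]
          rw [this]; ring
  calc ‖toE M‖ = Real.sqrt (∑ p : n × n, ‖M p.1 p.2‖ ^ 2) := h1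
    _ ≤ Real.sqrt ((M.trace.re) ^ 2) := Real.sqrt_le_sqrt h2
    _ = |M.trace.re| := by rw [Real.sqrt_sq_eq_abs]
    _ = M.trace.re := abs_of_nonneg (re_trace_nonneg hM)

lemma norm_apply_le {x : EuclideanSpace ℂ (n × n)} (p : n × n) : ‖x p‖ ≤ ‖x‖ := by
  rw [EuclideanSpace.norm_eq]
  have h1 : ‖x p‖ ^ 2 ≤ ∑ q : n × n, ‖x q‖ ^ 2 :=
    Finset.single_le_sum (fun q _ => sq_nonneg ‖x q‖) (Finset.mem_univ p)
  calc ‖x p‖ = Real.sqrt (‖x p‖ ^ 2) := by rw [Real.sqrt_sq (norm_nonneg _)]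
    _ ≤ Real.sqrt (∑ q : n × n, ‖x q‖ ^ 2) := Real.sqrt_le_sqrt h1

lemma re_trace_le_card_norm (M : Matrix n n ℂ) :
    M.trace.re ≤ (Fintype.card n) * ‖toE M‖ := by
  have : M.trace.re = ∑ i, (M i i).re := by simp [Matrix.trace, Complex.re_sum]
  rw [this]
  calc ∑ i, (M i i).re ≤ ∑ i : n, ‖toE M‖ := by
        apply Finset.sum_le_sum
        intro i _
        calc (M i i).re ≤ ‖M i i‖ := Complex.re_le_norm _
          _ = ‖toE M (i, i)‖ := rfl
          _ ≤ ‖toE M‖ := norm_apply_le (i, i)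
    _ = (Fintype.card n) * ‖toE M‖ := by
        rw [Finset.sum_const, nsmul_eq_mul]; simp

lemma trace_K_mul_conjTranspose {K M : Matrix n n ℂ} (hK : K.IsHermitian) :
    Matrix.trace (K * Mᴴ) = star (Matrix.trace (K * M)) := by
  have h1 : K * Mᴴ = (M * K)ᴴ := by rw [Matrix.conjTranspose_mul, hK.eq]
  rw [h1, Matrix.trace_conjTranspose, Matrix.trace_mul_comm]

lemma trace_psd_mul_nonneg {X Y : Matrix n n ℂ} (hX : X.PosSemidef) (hY : Y.PosSemidef) :
    0 ≤ (Matrix.trace (X * Y)).re := by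
  obtain ⟨B, rfl⟩ := psd_factor hY
  have h1 : Matrix.trace (X * (Bᴴ * B)) = Matrix.trace (B * X * Bᴴ) := by
    rw [← Matrix.mul_assoc, Matrix.trace_mul_comm, ← Matrix.mul_assoc]
  rw [h1]
  have h2 : (B * X * Bᴴ).PosSemidef := hX.mul_mul_conjTranspose_same B
  exact (Complex.le_def.mp (trace_nonneg' h2)).1

lemma eq_zero_of_trace_conjTranspose_mul_self {X : Matrix n n ℂ}
    (h : Matrix.trace (Xᴴ * X) = 0) : X = 0 := by
  have h1 : Matrix.trace (Xᴴ * X) = ∑ j, ∑ i, (Complex.normSq (X i j) : ℂ) := by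
    simp only [Matrix.trace, Matrix.mul_apply, Matrix.conjTranspose_apply, Matrix.diag_apply]
    congr 1; ext j; congr 1; ext i
    rw [Complex.normSq_eq_conj_mul_self]; rfl
  rw [h1] at h
  have h2 : ∑ j, ∑ i, Complex.normSq (X i j) = 0 := by
    have := congrArg Complex.re h
    simpa [Complex.re_sum] using this
  have h3 : ∀ j ∈ Finset.univ, ∀ i ∈ Finset.univ, Complex.normSq (X i j) = 0 := by
    intro j _
    have hj := (Finset.sum_eq_zero_iff_of_nonneg (fun j _ =>
      Finset.sum_nonneg fun i _ => Complex.normSq_nonneg _)).mp h2 j (Finset.mem_univ j)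
    exact fun i _ => (Finset.sum_eq_zero_iff_of_nonneg
      (fun i _ => Complex.normSq_nonneg _)).mp hj i (Finset.mem_univ i)
  ext i j
  simpa using Complex.normSq_eq_zero.mp (h3 j (Finset.mem_univ j) i (Finset.mem_univ i))

lemma dot_conjTranspose (M : Matrix n n ℂ) (x : n → ℂ) :
    star x ⬝ᵥ (Mᴴ *ᵥ x) = star (star x ⬝ᵥ (M *ᵥ x)) := by
  simp only [dotProduct, mulVec, Matrix.conjTranspose_apply, Pi.star_apply, star_sum, star_mul',
    Finset.mul_sum, star_star]
  rw [Finset.sum_comm]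
  apply Finset.sum_congr rfl; intro i _
  apply Finset.sum_congr rfl; intro j _
  ring_nf

lemma vecMulVec_posSemidef (v : n → ℂ) : (vecMulVec v (star v)).PosSemidef := by
  refine Matrix.PosSemidef.of_dotProduct_mulVec_nonneg ?_ ?_
  · ext i j
    simp [Matrix.conjTranspose_apply, vecMulVec_apply, mul_comm]
  · intro x
    have : star x ⬝ᵥ (vecMulVec v (star v) *ᵥ x) =
        star (star v ⬝ᵥ x) * (star v ⬝ᵥ x) := by
      simp only [dotProduct, mulVec, vecMulVec_apply, Pi.star_apply, Finset.mul_sum,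
        Finset.sum_mul, star_sum, star_mul', star_star]
      rw [Finset.sum_comm]
      apply Finset.sum_congr rfl; intro i _
      apply Finset.sum_congr rfl; intro j _
      ring
    rw [this]
    exact star_mul_self_nonneg _

lemma trace_vecMulVec_mul (v : n → ℂ) (M : Matrix n n ℂ) :
    Matrix.trace (vecMulVec v (star v) * M) = star v ⬝ᵥ (M *ᵥ v) := by
  simp only [Matrix.trace, Matrix.mul_apply, vecMulVec_apply, Matrix.diag_apply, dotProduct,
    mulVec, Pi.star_apply, Finset.mul_sum]
  rw [Finset.sum_comm]
  apply Finset.sum_congr rfl; intro i _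
  apply Finset.sum_congr rfl; intro j _
  ring

lemma psd_smul {M : Matrix n n ℂ} (hM : M.PosSemidef) {r : ℝ} (hr : 0 ≤ r) :
    ((r : ℂ) • M).PosSemidef := by
  refine Matrix.PosSemidef.of_dotProduct_mulVec_nonneg ?_ ?_
  · show ((r : ℂ) • M)ᴴ = (r : ℂ) • M
    rw [Matrix.conjTranspose_smul, hM.1.eq]
    congr 1
    simp
  · intro x
    rw [Matrix.smul_mulVec, dotProduct_smul, smul_eq_mul]
    exact mul_nonneg (by simpa using Complex.zero_le_real.mpr hr) (hM.dotProduct_mulVec_nonneg x)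

lemma herm_smul {X : Matrix n n ℂ} (hX : X.IsHermitian) (r : ℝ) :
    ((r : ℂ) • X).IsHermitian := by
  show ((r : ℂ) • X)ᴴ = (r : ℂ) • X
  rw [Matrix.conjTranspose_smul, hX.eq]
  congr 1
  simp

instance : FiniteDimensional ℝ (EuclideanSpace ℂ (n × n)) :=
  Module.Finite.trans ℂ (EuclideanSpace ℂ (n × n))

def psdSetE (n : Type*) [Fintype n] [DecidableEq n] : Set (EuclideanSpace ℂ (n × n)) :=
  {x | (mat x).PosSemidef}

lemma isClosed_psdSetE : IsClosed (psdSetE n) := by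
  have h1 : IsClosed {x : EuclideanSpace ℂ (n × n) | (mat x)ᴴ = mat x} := by
    let f : EuclideanSpace ℂ (n × n) →ₗ[ℝ] EuclideanSpace ℂ (n × n) :=
      { toFun := fun x => toE ((mat x)ᴴ) - x
        map_add' := by
          intro x y
          have : mat (x + y) = mat x + mat y := rfl
          simp only [this, Matrix.conjTranspose_add]
          show toE ((mat x)ᴴ + (mat y)ᴴ) - (x + y) = _
          have h2 : toE ((mat x)ᴴ + (mat y)ᴴ) = toE ((mat x)ᴴ) + toE ((mat y)ᴴ) := rfl
          rw [h2]; abel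
        map_smul' := by
          intro r x
          have h3 : mat (r • x) = r • mat x := rfl
          have h4 : (r • mat x)ᴴ = r • (mat x)ᴴ := by
            ext i j
            simp only [Matrix.conjTranspose_apply, Matrix.smul_apply]
            rw [Complex.real_smul, Complex.real_smul, star_mul', Complex.star_def, Complex.conj_ofReal]
          have h5 : toE (r • (mat x)ᴴ) = r • toE ((mat x)ᴴ) := rfl
          simp only [h3, h4, h5, RingHom.id_apply, smul_sub] }
    have hf : Continuous f := f.continuous_of_finiteDimensional
    have : {x : EuclideanSpace ℂ (n × n) | (mat x)ᴴ = mat x} = f ⁻¹' {0} := by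
      ext x
      simp only [Set.mem_setOf_eq, Set.mem_preimage, Set.mem_singleton_iff]
      constructor
      · intro h
        show toE ((mat x)ᴴ) - x = 0
        rw [h]
        show x - x = 0
        abel
      · intro h
        have h6 : toE ((mat x)ᴴ) = x := by
          have := sub_eq_zero.mp h
          exact this
        calc (mat x)ᴴ = mat (toE ((mat x)ᴴ)) := rfl
          _ = mat x := by rw [h6]
    rw [this]
    exact isClosed_singleton.preimage hf
  have h2 : ∀ v : n → ℂ, IsClosed {x : EuclideanSpace ℂ (n × n) | 0 ≤ star v ⬝ᵥ (mat x) *ᵥ v} := by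
    intro v
    let g : EuclideanSpace ℂ (n × n) →ₗ[ℂ] ℂ :=
      { toFun := fun x => star v ⬝ᵥ (mat x) *ᵥ v
        map_add' := by
          intro x y
          show star v ⬝ᵥ (mat (x + y)) *ᵥ v = _
          have : mat (x + y) = mat x + mat y := rfl
          rw [this, Matrix.add_mulVec, dotProduct_add]
        map_smul' := by
          intro c x
          show star v ⬝ᵥ (mat (c • x)) *ᵥ v = _
          have : mat (c • x) = c • mat x := rfl
          rw [this, Matrix.smul_mulVec, dotProduct_smul]
          rfl }
    have hg : Continuous g := g.continuous_of_finiteDimensional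
    have hcl : IsClosed {z : ℂ | 0 ≤ z} := by
      have : {z : ℂ | 0 ≤ z} = Complex.re ⁻¹' Set.Ici 0 ∩ Complex.im ⁻¹' {0} := by
        ext z
        simp only [Set.mem_setOf_eq, Set.mem_inter_iff, Set.mem_preimage, Set.mem_Ici,
          Set.mem_singleton_iff, Complex.le_def, Complex.zero_re, Complex.zero_im]
        tauto
      rw [this]
      exact (isClosed_Ici.preimage Complex.continuous_re).inter
        (isClosed_singleton.preimage Complex.continuous_im)
    exact hcl.preimage hg
  have : psdSetE n = {x : EuclideanSpace ℂ (n × n) | (mat x)ᴴ = mat x} ∩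
      ⋂ v : n → ℂ, {x | 0 ≤ star v ⬝ᵥ (mat x) *ᵥ v} := by
    ext x
    simp only [psdSetE, Set.mem_setOf_eq, Set.mem_inter_iff, Set.mem_iInter]
    exact Matrix.posSemidef_iff_dotProduct_mulVec
  rw [this]
  exact h1.inter (isClosed_iInter h2)

end Generic

section Kron

variable {A B : Type*} [Fintype A] [Fintype B] [DecidableEq A] [DecidableEq B]

lemma trace_kron_one_mul (X : Matrix A A ℂ) (M : Matrix (A × B) (A × B) ℂ) :
    Matrix.trace ((X ⊗ₖ (1 : Matrix B B ℂ)) * M) = Matrix.trace (X * trB M) := by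
  simp only [Matrix.trace, Matrix.mul_apply, Matrix.diag_apply, kroneckerMap_apply,
    Matrix.one_apply, trB, Matrix.of_apply, Fintype.sum_prod_type, mul_ite, mul_one, mul_zero,
    ite_mul, zero_mul, Finset.sum_ite_eq, Finset.mem_univ, if_true, Finset.mul_sum]
  apply Finset.sum_congr rfl
  intro x _
  exact Finset.sum_comm (f := fun (y : B) (x1 : A) => X x x1 * M (x1, y) (x, y))

lemma kron_one_conjTranspose (X : Matrix A A ℂ) :
    (X ⊗ₖ (1 : Matrix B B ℂ))ᴴ = Xᴴ ⊗ₖ (1 : Matrix B B ℂ) := by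
  ext ⟨i, k⟩ ⟨j, l⟩
  simp only [Matrix.conjTranspose_apply, kroneckerMap_apply, Matrix.one_apply]
  by_cases h : l = k <;> by_cases h' : k = l <;> simp_all [star_mul', mul_comm]

lemma kron_one_isHermitian {X : Matrix A A ℂ} (hX : X.IsHermitian) :
    (X ⊗ₖ (1 : Matrix B B ℂ)).IsHermitian := by
  show (X ⊗ₖ (1 : Matrix B B ℂ))ᴴ = X ⊗ₖ (1 : Matrix B B ℂ)
  rw [kron_one_conjTranspose, hX.eq]

lemma trB_conjTranspose (M : Matrix (A × B) (A × B) ℂ) : trB Mᴴ = (trB M)ᴴ := by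
  ext i j
  simp [trB, Matrix.conjTranspose_apply, star_sum]

lemma trB_add (M N : Matrix (A × B) (A × B) ℂ) : trB (M + N) = trB M + trB N := by
  ext i j; simp [trB, Finset.sum_add_distrib]

lemma trB_smul (c : ℂ) (M : Matrix (A × B) (A × B) ℂ) : trB (c • M) = c • trB M := by
  ext i j; simp [trB, Finset.mul_sum]

lemma trace_kron_one (X : Matrix A A ℂ) :
    Matrix.trace (X ⊗ₖ (1 : Matrix B B ℂ)) = (Fintype.card B) * X.trace := by
  rw [Matrix.trace_kronecker, Matrix.trace_one, mul_comm]

lemma eq_smul_one_of_trace_orth [Nonempty A] {N : Matrix A A ℂ} (hN : N.IsHermitian)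
    (h : ∀ X : Matrix A A ℂ, X.IsHermitian → X.trace = 0 → Matrix.trace (X * N) = 0) :
    ∃ r : ℝ, N = (r : ℂ) • 1 := by
  have htr : (N.trace.re : ℂ) = N.trace := by
    apply Complex.conj_eq_iff_re.mp
    rw [← Complex.star_def, ← Matrix.trace_conjTranspose, hN.eq]
  set c : ℝ := N.trace.re / Fintype.card A with hc
  refine ⟨c, ?_⟩
  set X : Matrix A A ℂ := N - (c : ℂ) • 1 with hX
  have hXh : X.IsHermitian := by
    show Xᴴ = X
    rw [hX, Matrix.conjTranspose_sub, hN.eq, Matrix.conjTranspose_smul]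
    congr 2
    · simp
    · exact Matrix.conjTranspose_one
  have hcard : (Fintype.card A : ℝ) ≠ 0 := Nat.cast_ne_zero.mpr Fintype.card_ne_zero
  have hXt : X.trace = 0 := by
    rw [hX, Matrix.trace_sub, Matrix.trace_smul, Matrix.trace_one, smul_eq_mul, hc, ← htr]
    push_cast
    field_simp
    simp
  have h0 := h X hXh hXt
  have hXN : Matrix.trace (X * N) = Matrix.trace (Xᴴ * X) := by
    have : N = X + (c : ℂ) • 1 := by rw [hX, sub_add_cancel]
    calc Matrix.trace (X * N) = Matrix.trace (X * (X + (c : ℂ) • 1)) := by rw [← this]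
      _ = Matrix.trace (X * X) + (c : ℂ) * X.trace := by
          rw [Matrix.mul_add, Matrix.trace_add]
          congr 1
          rw [Matrix.mul_smul, Matrix.mul_one, Matrix.trace_smul, smul_eq_mul]
      _ = Matrix.trace (X * X) := by rw [hXt, mul_zero, add_zero]
      _ = Matrix.trace (Xᴴ * X) := by rw [hXh.eq]
  have hX0 : X = 0 := by
    apply eq_zero_of_trace_conjTranspose_mul_self
    rw [← hXN, h0]
  have h1 : N - (c : ℂ) • 1 = 0 := by rw [← hX]; exact hX0
  exact sub_eq_zero.mp h1

def Sset (A B : Type*) [Fintype A] [Fintype B] [DecidableEq A] [DecidableEq B] :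
    Set (EuclideanSpace ℂ ((A × B) × (A × B))) :=
  {x | ∃ (ω : Matrix (A × B) (A × B) ℂ) (X : Matrix A A ℂ),
    ω.PosSemidef ∧ X.IsHermitian ∧ X.trace = 0 ∧ x = toE (ω + X ⊗ₖ (1 : Matrix B B ℂ))}

noncomputable def lSub (A B : Type*) [Fintype A] [Fintype B] [DecidableEq A] [DecidableEq B] :
    Submodule ℝ (EuclideanSpace ℂ ((A × B) × (A × B))) where
  carrier := {x | ∃ X : Matrix A A ℂ, X.IsHermitian ∧ X.trace = 0 ∧
    x = toE (X ⊗ₖ (1 : Matrix B B ℂ))}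
  add_mem' := by
    rintro x y ⟨X, hX, hXt, rfl⟩ ⟨Y, hY, hYt, rfl⟩
    exact ⟨X + Y, hX.add hY, by rw [Matrix.trace_add, hXt, hYt, add_zero],
      by rw [Matrix.add_kronecker, toE_add]⟩
  zero_mem' := ⟨0, Matrix.isHermitian_zero, Matrix.trace_zero _ _,
    by rw [Matrix.zero_kronecker, toE_zero]⟩
  smul_mem' := by
    rintro r x ⟨X, hX, hXt, rfl⟩
    refine ⟨(r : ℂ) • X, herm_smul hX r, by rw [Matrix.trace_smul, hXt, smul_zero], ?_⟩
    rw [real_smul_E, Matrix.smul_kronecker, toE_smul]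

noncomputable def Scone (A B : Type*) [Fintype A] [Fintype B] [DecidableEq A] [DecidableEq B] :
    ConvexCone ℝ (EuclideanSpace ℂ ((A × B) × (A × B))) where
  carrier := Sset A B
  smul_mem' := by
    rintro c hc x ⟨ω, X, hω, hX, hXt, rfl⟩
    refine ⟨(c : ℂ) • ω, (c : ℂ) • X, psd_smul hω hc.le, herm_smul hX c,
      by rw [Matrix.trace_smul, hXt, smul_zero], ?_⟩
    rw [real_smul_E, ← toE_smul, smul_add, Matrix.smul_kronecker]
  add_mem' := by
    rintro x ⟨ω, X, hω, hX, hXt, rfl⟩ y ⟨ω', X', hω', hX', hXt', rfl⟩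
    refine ⟨ω + ω', X + X', hω.add hω', hX.add hX',
      by rw [Matrix.trace_add, hXt, hXt', add_zero], ?_⟩
    have hmm : (ω + X ⊗ₖ (1 : Matrix B B ℂ)) + (ω' + X' ⊗ₖ (1 : Matrix B B ℂ))
        = ω + ω' + (X + X') ⊗ₖ (1 : Matrix B B ℂ) := by
      rw [Matrix.add_kronecker]; abel
    rw [← toE_add, hmm]

lemma Sset_nonempty : (Sset A B).Nonempty :=
  ⟨0, 0, 0, Matrix.PosSemidef.zero, Matrix.isHermitian_zero, Matrix.trace_zero _ _,
    by rw [Matrix.zero_kronecker, add_zero, toE_zero]⟩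

lemma isClosed_Sset : IsClosed (Sset A B) := by
  apply isClosed_of_closure_subset
  intro x hx
  set NN : ℝ := (Fintype.card ((A × B)) : ℝ) with hNN
  have hNN0 : 0 ≤ NN := Nat.cast_nonneg _
  set R : ℝ := ‖x‖ + 1 with hR
  have hR0 : 0 ≤ R := by positivity
  set KC : Set (EuclideanSpace ℂ ((A × B) × (A × B))) :=
    psdSetE (A × B) ∩ Metric.closedBall 0 (NN * R) with hKC_def
  set LC : Set (EuclideanSpace ℂ ((A × B) × (A × B))) :=
    (lSub A B : Set _) ∩ Metric.closedBall 0 (R + NN * R) with hLC_def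
  have hKC : IsCompact KC :=
    IsCompact.inter_left (isCompact_closedBall _ _) isClosed_psdSetE
  have hLC : IsCompact LC :=
    IsCompact.inter_left (isCompact_closedBall _ _) (lSub A B).closed_of_finiteDimensional
  have hsub : Sset A B ∩ Metric.closedBall x 1 ⊆ KC + LC := by
    rintro s ⟨⟨ω, X, hω, hX, hXt, rfl⟩, hball⟩
    have hsn : ‖toE (ω + X ⊗ₖ (1 : Matrix B B ℂ))‖ ≤ R := by
      have h1 := mem_closedBall_iff_norm.mp hball
      calc ‖toE (ω + X ⊗ₖ (1 : Matrix B B ℂ))‖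
          = ‖(toE (ω + X ⊗ₖ (1 : Matrix B B ℂ)) - x) + x‖ := by rw [sub_add_cancel]
        _ ≤ ‖toE (ω + X ⊗ₖ (1 : Matrix B B ℂ)) - x‖ + ‖x‖ := norm_add_le _ _
        _ ≤ 1 + ‖x‖ := by linarith
        _ = R := by rw [hR]; ring
    have htr : ω.trace.re = ((ω + X ⊗ₖ (1 : Matrix B B ℂ)).trace).re := by
      rw [Matrix.trace_add, trace_kron_one, hXt, mul_zero, add_zero]
    have hω_norm : ‖toE ω‖ ≤ NN * R := by
      calc ‖toE ω‖ ≤ ω.trace.re := norm_toE_le hω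
        _ = ((ω + X ⊗ₖ (1 : Matrix B B ℂ)).trace).re := htr
        _ ≤ NN * ‖toE (ω + X ⊗ₖ (1 : Matrix B B ℂ))‖ := re_trace_le_card_norm _
        _ ≤ NN * R := mul_le_mul_of_nonneg_left hsn hNN0
    have hl_norm : ‖toE (X ⊗ₖ (1 : Matrix B B ℂ))‖ ≤ R + NN * R := by
      have heq : toE (X ⊗ₖ (1 : Matrix B B ℂ)) =
          toE (ω + X ⊗ₖ (1 : Matrix B B ℂ)) - toE ω := by
        rw [toE_add]; abel
      rw [heq]
      calc ‖toE (ω + X ⊗ₖ (1 : Matrix B B ℂ)) - toE ω‖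
          ≤ ‖toE (ω + X ⊗ₖ (1 : Matrix B B ℂ))‖ + ‖toE ω‖ := norm_sub_le _ _
        _ ≤ R + NN * R := add_le_add hsn hω_norm
    have hmem1 : toE ω ∈ KC := by
      constructor
      · show (mat (toE ω)).PosSemidef
        rw [mat_toE]; exact hω
      · rw [Metric.mem_closedBall, dist_zero_right]; exact hω_norm
    have hmem2 : toE (X ⊗ₖ (1 : Matrix B B ℂ)) ∈ LC := by
      constructor
      · exact ⟨X, hX, hXt, rfl⟩
      · rw [Metric.mem_closedBall, dist_zero_right]; exact hl_norm
    have : toE (ω + X ⊗ₖ (1 : Matrix B B ℂ)) = toE ω + toE (X ⊗ₖ (1 : Matrix B B ℂ)) :=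
      toE_add _ _
    rw [this]
    exact Set.add_mem_add hmem1 hmem2
  have hx1 : x ∈ closure (Sset A B ∩ Metric.closedBall x 1) := by
    rw [mem_closure_iff_nhds] at hx ⊢
    intro t ht
    obtain ⟨y, hy1, hy2⟩ := hx (t ∩ Metric.ball x 1)
      (Filter.inter_mem ht (Metric.ball_mem_nhds x one_pos))
    exact ⟨y, hy1.1, hy2, Metric.ball_subset_closedBall hy1.2⟩
  have hxmem : x ∈ KC + LC := by
    have h2 := closure_mono hsub hx1
    rwa [(hKC.add hLC).isClosed.closure_eq] at h2
  obtain ⟨a, ha, b, hb, hab⟩ := Set.mem_add.mp hxmem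
  obtain ⟨X, hXh, hXt, rfl⟩ := hb.1
  refine ⟨mat a, X, ha.1, hXh, hXt, ?_⟩
  rw [toE_add, toE_mat, hab]

noncomputable def SPcone (A B : Type*) [Fintype A] [Fintype B] [DecidableEq A] [DecidableEq B] :
    ProperCone ℝ (EuclideanSpace ℂ ((A × B) × (A × B))) where
  toSubmodule := (Scone A B).toPointedCone
    (show (0 : EuclideanSpace ℂ ((A × B) × (A × B))) ∈ Sset A B from
      ⟨0, 0, Matrix.PosSemidef.zero, Matrix.isHermitian_zero, Matrix.trace_zero _ _,
        by rw [Matrix.zero_kronecker, add_zero, toE_zero]⟩)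
  isClosed' := (isClosed_Sset : IsClosed (Sset A B))

end Kron

end Stmt8Aux

theorem stmt8 {A B : Type*} [Fintype A] [Fintype B] [Nonempty A] [Nonempty B]
    [DecidableEq A] [DecidableEq B]
    (K : Matrix (A × B) (A × B) ℂ) (hK : K.IsHermitian) :
    (∀ C : Matrix (A × B) (A × B) ℂ, C.PosSemidef →
        (∃ r : ℝ, trB C = r • (1 : Matrix A A ℂ)) →
        0 ≤ (Matrix.trace (K * C)).re) ↔
    (∃ (ω : Matrix (A × B) (A × B) ℂ) (A' : Matrix A A ℂ),
        ω.PosSemidef ∧ A'.IsHermitian ∧ A'.trace = 0 ∧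
        K = ω + A' ⊗ₖ (1 : Matrix B B ℂ)) := by
  constructor
  · intro h
    have hbid := ProperCone.innerDual_innerDual (Stmt8Aux.SPcone A B)
    have hmem : Stmt8Aux.toE K ∈ ProperCone.innerDual
        ((ProperCone.innerDual ((Stmt8Aux.SPcone A B : Set (EuclideanSpace ℂ ((A × B) × (A × B)))))
          : Set (EuclideanSpace ℂ ((A × B) × (A × B))))) := by
      rw [ProperCone.mem_innerDual]
      intro C hC
      rw [SetLike.mem_coe, ProperCone.mem_innerDual] at hC
      set M := Stmt8Aux.mat C with hMdef
      have hCeq : C = Stmt8Aux.toE M := (Stmt8Aux.toE_mat C).symm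
      have hpair : ∀ (ω : Matrix (A × B) (A × B) ℂ) (X : Matrix A A ℂ), ω.PosSemidef →
          X.IsHermitian → X.trace = 0 →
          0 ≤ (Matrix.trace ((ω + X ⊗ₖ (1 : Matrix B B ℂ))ᴴ * M)).re := by
        intro ω X hω hX hXt
        have := hC (x := Stmt8Aux.toE (ω + X ⊗ₖ (1 : Matrix B B ℂ)))
          (show _ ∈ Stmt8Aux.Sset A B from ⟨ω, X, hω, hX, hXt, rfl⟩)
        rwa [hCeq, Stmt8Aux.real_inner_toE] at this
      have hpsd : ∀ ω : Matrix (A × B) (A × B) ℂ, ω.PosSemidef →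
          0 ≤ (Matrix.trace (ω * M)).re := by
        intro ω hω
        have h1 := hpair ω 0 hω Matrix.isHermitian_zero (Matrix.trace_zero _ _)
        rw [Matrix.zero_kronecker, add_zero, hω.1.eq] at h1
        exact h1
      have hlin : ∀ X : Matrix A A ℂ, X.IsHermitian → X.trace = 0 →
          (Matrix.trace (X * trB M)).re = 0 := by
        intro X hX hXt
        have h1 := hpair 0 X Matrix.PosSemidef.zero hX hXt
        have h2 := hpair 0 (-X) Matrix.PosSemidef.zero hX.neg (by rw [Matrix.trace_neg, hXt, neg_zero])
        rw [zero_add, (Stmt8Aux.kron_one_isHermitian hX).eq, Stmt8Aux.trace_kron_one_mul] at h1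
        rw [zero_add, (Stmt8Aux.kron_one_isHermitian hX.neg).eq, Stmt8Aux.trace_kron_one_mul,
          Matrix.neg_mul, Matrix.trace_neg, Complex.neg_re] at h2
        linarith
      set M' := (2 : ℂ)⁻¹ • (M + Mᴴ) with hM'def
      have hM'psd : M'.PosSemidef := by
        refine Matrix.PosSemidef.of_dotProduct_mulVec_nonneg ?_ ?_
        · show M'ᴴ = M'
          rw [hM'def, Matrix.conjTranspose_smul, Matrix.conjTranspose_add,
            Matrix.conjTranspose_conjTranspose]
          congr 1
          · simp
          · abel
        · intro x
          have hq : star x ⬝ᵥ (M' *ᵥ x) = (((star x ⬝ᵥ (M *ᵥ x)).re : ℝ) : ℂ) := by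
            rw [hM'def, Matrix.smul_mulVec, dotProduct_smul, Matrix.add_mulVec,
              dotProduct_add, Stmt8Aux.dot_conjTranspose, smul_eq_mul, Complex.star_def,
              Complex.add_conj]
            push_cast
            ring
          rw [hq]
          apply Complex.zero_le_real.mpr
          have h3 := hpsd (vecMulVec x (star x)) (Stmt8Aux.vecMulVec_posSemidef x)
          rwa [Stmt8Aux.trace_vecMulVec_mul] at h3
      have hNherm : (trB M').IsHermitian := by
        show (trB M')ᴴ = trB M'
        rw [← Stmt8Aux.trB_conjTranspose, hM'psd.1.eq]
      have horth : ∀ X : Matrix A A ℂ, X.IsHermitian → X.trace = 0 →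
          Matrix.trace (X * trB M') = 0 := by
        intro X hX hXt
        have hsplit : Matrix.trace (X * trB M') =
            (2 : ℂ)⁻¹ * (Matrix.trace (X * trB M) + Matrix.trace (X * trB Mᴴ)) := by
          rw [hM'def, Stmt8Aux.trB_smul, Stmt8Aux.trB_add, Matrix.mul_smul, Matrix.trace_smul,
            smul_eq_mul, Matrix.mul_add, Matrix.trace_add]
        have hconj : Matrix.trace (X * trB Mᴴ) = star (Matrix.trace (X * trB M)) := by
          rw [Stmt8Aux.trB_conjTranspose]
          exact Stmt8Aux.trace_K_mul_conjTranspose hX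
        rw [hsplit, hconj, Complex.star_def, Complex.add_conj, hlin X hX hXt]
        simp
      obtain ⟨r, hr⟩ := Stmt8Aux.eq_smul_one_of_trace_orth hNherm horth
      have hfeas : ∃ r : ℝ, trB M' = r • (1 : Matrix A A ℂ) :=
        ⟨r, by rw [hr, ← Stmt8Aux.real_smul_eq]⟩
      have hfinal := h M' hM'psd hfeas
      rw [hCeq, Stmt8Aux.real_inner_toE]
      have e1 : Matrix.trace (Mᴴ * K) = star (Matrix.trace (K * M)) := by
        rw [Matrix.trace_mul_comm]
        exact Stmt8Aux.trace_K_mul_conjTranspose hK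
      have e2 : Matrix.trace (K * M') = (((Matrix.trace (K * M)).re : ℝ) : ℂ) := by
        rw [hM'def, Matrix.mul_smul, Matrix.trace_smul, Matrix.mul_add, Matrix.trace_add,
          Stmt8Aux.trace_K_mul_conjTranspose hK, smul_eq_mul, Complex.star_def,
          Complex.add_conj]
        push_cast
        ring
      have e3 : (Matrix.trace (Mᴴ * K)).re = (Matrix.trace (K * M')).re := by
        rw [e1, e2]
        simp
      rw [e3]
      exact hfinal
    rw [hbid] at hmem
    obtain ⟨ω, X, hω, hX, hXt, heq⟩ : Stmt8Aux.toE K ∈ Stmt8Aux.Sset A B := hmem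
    exact ⟨ω, X, hω, hX, hXt, Stmt8Aux.toE_inj heq⟩
  · rintro ⟨ω, X, hω, hX, hXt, rfl⟩ C hC ⟨r, hr⟩
    rw [Matrix.add_mul, Matrix.trace_add, Complex.add_re]
    have h1 : 0 ≤ (Matrix.trace (ω * C)).re := Stmt8Aux.trace_psd_mul_nonneg hω hC
    have h2 : (Matrix.trace ((X ⊗ₖ (1 : Matrix B B ℂ)) * C)).re = 0 := by
      rw [Stmt8Aux.trace_kron_one_mul, hr, Stmt8Aux.real_smul_eq, Matrix.mul_smul,
        Matrix.mul_one, Matrix.trace_smul, smul_eq_mul, hXt, mul_zero]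
      simp
    linarith
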